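/- With the setup of the wavelet-set construction (0 < r < R/3, A_0 = B_∞(0, r/2), a = (R/r)I, T̃ the piecewise translation by R·ξ_j on the j-th quadrant, A_n = (a⁻¹∘T̃)ⁿ(A_0)): if x ∈ A_n (n ≥ 1) then (rR/(R−r))·(1 − (r/R)ⁿ) ≤ ‖x‖_∞ ≤ (rR/(R−r))·(1 − (r/R)ⁿ·(r+R)/(2R)). -/

import Mathlib

open MeasureTheory Filter
noncomputable section

/-- The piecewise translation `T̃(x) = x + R·ξ_j` for `x` in the `j`-th quadrant. -/
def quadShift {d : ℕ} (R : ℝ) (x : Fin d → ℝ) : Fin d → ℝ :=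
  x + fun i => R * (if 0 < x i then 1 else -1)

/-- `A_0 = B_∞(0, r/2)` and `A_{n+1} = (a⁻¹ ∘ T̃)(A_n)` with `a = (R/r)·I`. -/
def Aset (d : ℕ) (r R : ℝ) : ℕ → Set (Fin d → ℝ)
  | 0 => Metric.closedBall 0 (r / 2)
  | n + 1 => (fun x => (r / R) • quadShift R x) '' Aset d r R n


lemma quadShift_norm {d : ℕ} (hd : 0 < d) (R : ℝ) (hR : 0 < R) (x : Fin d → ℝ) :
    ‖quadShift R x‖ = R + ‖x‖ := by
  have key : ∀ i, ‖quadShift R x i‖ = R + ‖x i‖ := by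
    intro i
    simp only [quadShift, Pi.add_apply, Real.norm_eq_abs]
    split_ifs with h
    · rw [mul_one, abs_of_pos (by linarith), abs_of_pos h]; ring
    · push_neg at h
      rw [abs_of_nonpos (by nlinarith), abs_of_nonpos h]; ring
  have : Nonempty (Fin d) := ⟨⟨0, hd⟩⟩
  apply le_antisymm
  · rw [pi_norm_le_iff_of_nonempty]
    intro i
    rw [key i]
    have := norm_le_pi_norm x i
    linarith
  · obtain ⟨i, _, hi⟩ := Finset.exists_mem_eq_sup (Finset.univ : Finset (Fin d))
      Finset.univ_nonempty (fun i => ‖x i‖₊)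
    have hxi : ‖x‖ = ‖x i‖ := congrArg NNReal.toReal hi
    calc R + ‖x‖ = ‖quadShift R x i‖ := by rw [key i, hxi]
    _ ≤ ‖quadShift R x‖ := norm_le_pi_norm _ i

/-- Norm bounds for points of `A_n`, `n ≥ 1`: if `x ∈ A_n` then
`(rR/(R−r))(1 − (r/R)ⁿ) ≤ ‖x‖_∞ ≤ (rR/(R−r))(1 − (r/R)ⁿ(r+R)/(2R))`.
(The norm on `Fin d → ℝ` is the sup norm.) -/
theorem Aset_norm_bounds {d : ℕ} (hd : 0 < d) (r R : ℝ) (hr : 0 < r) (hrR : 3 * r < R)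
    (n : ℕ) (hn : 1 ≤ n) (x : Fin d → ℝ) (hx : x ∈ Aset d r R n) :
    r * R / (R - r) * (1 - (r / R) ^ n) ≤ ‖x‖ ∧
      ‖x‖ ≤ r * R / (R - r) * (1 - (r / R) ^ n * ((r + R) / (2 * R))) := by
  clear hn
  have hR : 0 < R := by linarith
  have hRr : 0 < R - r := by linarith
  induction n generalizing x with
  | zero =>
    simp only [Aset, Metric.mem_closedBall, dist_zero_right] at hx
    constructor
    · have : r * R / (R - r) * (1 - (r / R) ^ 0) = 0 := by
        field_simp; ring
      rw [this]; exact norm_nonneg x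
    · have : r * R / (R - r) * (1 - (r / R) ^ 0 * ((r + R) / (2 * R))) = r / 2 := by
        field_simp; ring
      linarith
  | succ n ih =>
    obtain ⟨y, hy, rfl⟩ := hx
    obtain ⟨h1, h2⟩ := ih y hy
    have hnorm : ‖(r / R) • quadShift R y‖ = (r / R) * (R + ‖y‖) := by
      rw [norm_smul, quadShift_norm hd R hR, Real.norm_eq_abs,
        abs_of_pos (div_pos hr hR)]
    rw [hnorm]
    have hq : (0:ℝ) < r / R := div_pos hr hR
    constructor
    · have key : r * R / (R - r) * (1 - (r / R) ^ (n + 1)) =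
          (r / R) * (R + r * R / (R - r) * (1 - (r / R) ^ n)) := by
        rw [div_pow, div_pow]; field_simp; ring
      rw [key]
      have := mul_le_mul_of_nonneg_left (by linarith : R + r * R / (R - r) * (1 - (r / R) ^ n) ≤ R + ‖y‖) hq.le
      linarith
    · have key : r * R / (R - r) * (1 - (r / R) ^ (n + 1) * ((r + R) / (2 * R))) =
          (r / R) * (R + r * R / (R - r) * (1 - (r / R) ^ n * ((r + R) / (2 * R)))) := by
        rw [div_pow, div_pow]; field_simp; ring
      rw [key]
      have := mul_le_mul_of_nonneg_left (by linarith : R + ‖y‖ ≤ R + r * R / (R - r) * (1 - (r / R) ^ n * ((r + R) / (2 * R)))) hq.le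
      linarith
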